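/- Let X = {x_1,…,x_n} with n ≥ 3, let 𝒟 contain all two- and three-element subsets of X, let π be the ranking with π(x_i) > π(x_{i+1}) for all i, and π⁻ its reverse. Then the vertices ρ^π and ρ^{π⁻} of the random utility polytope are adjacent: there exist t ∈ ℝ^{𝒟×X} and a ∈ ℝ with ρ^π · t = ρ^{π⁻} · t = a and ρ^σ · t > a for every ranking σ ∉ {π, π⁻}. -/

import Mathlib

/-- The deterministic choice vector associated with a ranking `π` of `X`. -/
def rhoVec {X : Type*} [Fintype X] [DecidableEq X] (𝒟 : Finset (Finset X)) {m : ℕ}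
    (π : X ≃ Fin m) : ({D : Finset X // D ∈ 𝒟} × X) → ℝ :=
  fun q => if q.2 ∈ q.1.1 ∧ ∀ y ∈ q.1.1, y ≠ q.2 → π y < π q.2 then 1 else 0

namespace RhoAux

def cval (n : ℕ) (x : ℕ) : ℝ := if x = 1 then -((n : ℝ) - 2) else 1

def tval (n : ℕ) (D : Finset (Fin n)) (x : Fin n) : ℝ :=
  if D.card = 3 ∧ x ∈ D ∧ (∃ y ∈ D, y < x) ∧ (∃ z ∈ D, x < z) then (n : ℝ)
  else if D.card = 2 ∧ x ∈ D ∧ (∃ y ∈ D, (y : ℕ) + 1 = (x : ℕ)) then cval n x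
  else 0

def chooses {n : ℕ} (σ : Fin n ≃ Fin n) (D : Finset (Fin n)) (x : Fin n) : Prop :=
  x ∈ D ∧ ∀ y ∈ D, y ≠ x → σ y < σ x

instance {n : ℕ} (σ : Fin n ≃ Fin n) (D : Finset (Fin n)) (x : Fin n) :
    Decidable (chooses σ D x) := inferInstanceAs (Decidable (_ ∧ _))

theorem rho_apply {n : ℕ} {𝒟 : Finset (Finset (Fin n))} (σ : Fin n ≃ Fin n)
    (D : {D : Finset (Fin n) // D ∈ 𝒟}) (x : Fin n) :
    rhoVec 𝒟 σ (D, x) = if chooses σ D.1 x then (1 : ℝ) else 0 := by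
  simp only [rhoVec, chooses]
  split_ifs with h1; exacts [(if_pos h1).symm, (if_neg h1).symm]

noncomputable def pick {n : ℕ} (σ : Fin n ≃ Fin n) (D : Finset (Fin n)) : ℝ :=
  if h : ∃ x, chooses σ D x then tval n D h.choose else 0

theorem chooses_unique {n : ℕ} {σ : Fin n ≃ Fin n} {D : Finset (Fin n)} {x x' : Fin n}
    (h : chooses σ D x) (h' : chooses σ D x') : x = x' := by
  by_contra hne
  exact lt_asymm (h.2 x' h'.1 (Ne.symm hne)) (h'.2 x h.1 hne)

theorem pick_eq {n : ℕ} {σ : Fin n ≃ Fin n} {D : Finset (Fin n)} {x : Fin n}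
    (h : chooses σ D x) : pick σ D = tval n D x := by
  rw [pick, dif_pos ⟨x, h⟩]
  congr 1
  exact chooses_unique (Exists.choose_spec (⟨x, h⟩ : ∃ x, chooses σ D x)) h

theorem exists_chooses {n : ℕ} (σ : Fin n ≃ Fin n) {D : Finset (Fin n)} (h : D.Nonempty) :
    ∃ x, chooses σ D x := by
  obtain ⟨b, hb, hmax⟩ := D.exists_max_image σ h
  exact ⟨b, hb, fun y hy hne => lt_of_le_of_ne (hmax y hy) (fun e => hne (σ.injective e))⟩

theorem sum_eq {n : ℕ} (𝒟 : Finset (Finset (Fin n))) (σ : Fin n ≃ Fin n) :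
    ∑ i : {D : Finset (Fin n) // D ∈ 𝒟} × Fin n,
      rhoVec 𝒟 σ i * tval n i.1.1 i.2 = ∑ D ∈ 𝒟, pick σ D := by
  rw [Fintype.sum_prod_type]
  rw [← Finset.sum_attach 𝒟 (fun D => pick σ D), Finset.univ_eq_attach]
  refine Finset.sum_congr rfl (fun D _ => ?_)
  by_cases h : ∃ x, chooses σ D.1 x
  · obtain ⟨x₀, hx₀⟩ := h
    rw [pick_eq hx₀]
    have : ∀ x : Fin n, rhoVec 𝒟 σ (D, x) * tval n D.1 x
        = if x = x₀ then tval n D.1 x else 0 := by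
      intro x
      rw [rho_apply]
      by_cases hx : x = x₀
      · subst hx
        rw [if_pos hx₀, if_pos rfl, one_mul]
      · rw [if_neg, if_neg hx, zero_mul]
        exact fun hc => hx (chooses_unique hc hx₀)
    rw [Finset.sum_congr rfl (fun x _ => this x), Finset.sum_ite_eq' Finset.univ x₀]
    simp
  · rw [pick, dif_neg h]
    refine Finset.sum_eq_zero (fun x _ => ?_)
    rw [rho_apply, if_neg (fun hc => h ⟨x, hc⟩), zero_mul]

/-- The adjacent pair `{i, i+1}` as a subset of `Fin n`. -/
def pairFun {n : ℕ} (i : Fin (n - 1)) : Finset (Fin n) :=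
  {⟨i.1, by have h := i.isLt; omega⟩, ⟨i.1 + 1, by have h := i.isLt; omega⟩}

theorem pairFun_card {n : ℕ} (i : Fin (n - 1)) : (pairFun i).card = 2 := by
  rw [pairFun, Finset.card_pair]
  simp [Fin.ext_iff]

theorem pairFun_injective {n : ℕ} : Function.Injective (pairFun (n := n)) := by
  intro i j h
  have hi := i.isLt
  have hj := j.isLt
  have h1 : (⟨i.1, by omega⟩ : Fin n) ∈ pairFun j := by
    rw [← h]; exact Finset.mem_insert_self _ _
  have h2 : (⟨i.1 + 1, by omega⟩ : Fin n) ∈ pairFun j := by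
    rw [← h]; simp [pairFun]
  simp only [pairFun, Finset.mem_insert, Finset.mem_singleton, Fin.mk.injEq] at h1 h2
  exact Fin.ext (by omega)

theorem pair_eq {n : ℕ} {D : Finset (Fin n)} {x y : Fin n} (hcard : D.card = 2)
    (hx : x ∈ D) (hy : y ∈ D) (hne : y ≠ x) : D = {y, x} := by
  have hsub : ({y, x} : Finset (Fin n)) ⊆ D := by
    intro z hz
    simp only [Finset.mem_insert, Finset.mem_singleton] at hz
    rcases hz with rfl | rfl <;> assumption
  have hc2 : ({y, x} : Finset (Fin n)).card = 2 := Finset.card_pair hne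
  exact (Finset.eq_of_subset_of_card_le hsub (by omega)).symm

theorem tval_zero_of_least {n : ℕ} {D : Finset (Fin n)} {x : Fin n}
    (hmin : ∀ y ∈ D, y ≠ x → x < y) : tval n D x = 0 := by
  rw [tval]
  split_ifs with h1 h2
  · obtain ⟨y, hy, hyx⟩ := h1.2.2.1
    exact absurd (hmin y hy (ne_of_lt hyx)) (lt_asymm hyx)
  · obtain ⟨y, hy, hyx⟩ := h2.2.2
    have hlt : y < x := Fin.lt_def.mpr (by omega)
    exact absurd (hmin y hy (ne_of_lt hlt)) (lt_asymm hlt)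
  · rfl

theorem pick_rev {n : ℕ} (D : Finset (Fin n)) : pick Fin.revPerm D = 0 := by
  by_cases h : ∃ x, chooses Fin.revPerm D x
  · obtain ⟨x₀, h₀⟩ := h
    rw [pick_eq h₀]
    refine tval_zero_of_least (fun y hy hne => ?_)
    have h2 := h₀.2 y hy hne
    simpa [Fin.rev_lt_rev] using h2
  · rw [pick, dif_neg h]

theorem tval_nonneg {n : ℕ} (hn : 3 ≤ n) {D : Finset (Fin n)} {x : Fin n}
    (hD : D ≠ pairFun ⟨0, by omega⟩) : 0 ≤ tval n D x := by
  rw [tval]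
  split_ifs with h1 h2
  · exact Nat.cast_nonneg n
  · rw [cval]
    split_ifs with h3
    · exfalso
      apply hD
      obtain ⟨hcard, hx, y, hy, hyx⟩ := h2
      have hne : y ≠ x := fun e => by rw [e] at hyx; omega
      rw [pair_eq hcard hx hy hne]
      ext z
      simp only [pairFun, Finset.mem_insert, Finset.mem_singleton, Fin.ext_iff]
      omega
    · exact zero_le_one
  · exact le_refl 0

theorem tval_ge_neg {n : ℕ} (hn : 3 ≤ n) (D : Finset (Fin n)) (x : Fin n) :
    -((n : ℝ) - 2) ≤ tval n D x := by
  have hc : (3 : ℝ) ≤ (n : ℝ) := by exact_mod_cast hn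
  rw [tval]
  split_ifs with h1 h2
  · linarith
  · rw [cval]; split_ifs with h3
    · exact le_refl _
    · linarith
  · linarith

theorem pick_nonneg {n : ℕ} (hn : 3 ≤ n) (σ : Fin n ≃ Fin n) {D : Finset (Fin n)}
    (hD : D ≠ pairFun ⟨0, by omega⟩) : 0 ≤ pick σ D := by
  by_cases h : ∃ x, chooses σ D x
  · obtain ⟨x₀, h₀⟩ := h
    rw [pick_eq h₀]
    exact tval_nonneg hn hD
  · rw [pick, dif_neg h]

theorem pick_ge_neg {n : ℕ} (hn : 3 ≤ n) (σ : Fin n ≃ Fin n) (D : Finset (Fin n)) :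
    -((n : ℝ) - 2) ≤ pick σ D := by
  have hc : (3 : ℝ) ≤ (n : ℝ) := by exact_mod_cast hn
  by_cases h : ∃ x, chooses σ D x
  · obtain ⟨x₀, h₀⟩ := h
    rw [pick_eq h₀]
    exact tval_ge_neg hn D x₀
  · rw [pick, dif_neg h]; linarith

theorem eq_refl_of_ascents {n : ℕ} (σ : Fin n ≃ Fin n)
    (h : ∀ j : ℕ, (hj : j + 1 < n) → σ ⟨j, by omega⟩ < σ ⟨j + 1, hj⟩) :
    σ = Equiv.refl (Fin n) := by
  have key : ∀ k : ℕ, (hk : k < n) → k ≤ (σ ⟨k, hk⟩).1 := by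
    intro k
    induction k with
    | zero => intro _; exact Nat.zero_le _
    | succ m ih =>
      intro hk
      have h1 := Fin.lt_def.mp (h m hk)
      have h2 := ih (by omega)
      omega
  have hle : ∀ i : Fin n, i.1 ≤ (σ i).1 := fun i => by
    have := key i.1 i.isLt
    simpa using this
  have hsum : ∑ i : Fin n, ((σ i).1) = ∑ i : Fin n, (i.1) := Equiv.sum_comp σ Fin.val
  have heq := (Finset.sum_eq_sum_iff_of_le (fun i _ => hle i)).mp hsum.symm
  exact Equiv.ext (fun i => Fin.ext (heq i (Finset.mem_univ i)).symm)

theorem eq_rev_of_descents {n : ℕ} (σ : Fin n ≃ Fin n)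
    (h : ∀ j : ℕ, (hj : j + 1 < n) → σ ⟨j + 1, hj⟩ < σ ⟨j, by omega⟩) :
    σ = Fin.revPerm := by
  have key : ∀ k : ℕ, (hk : k < n) → (σ ⟨k, hk⟩).1 + k ≤ n - 1 := by
    intro k
    induction k with
    | zero =>
      intro hk
      have := (σ ⟨0, hk⟩).isLt
      omega
    | succ m ih =>
      intro hk
      have h1 := Fin.lt_def.mp (h m hk)
      have h2 := ih (by omega)
      omega
  have hle : ∀ i : Fin n, (σ i).1 ≤ (Fin.revPerm i).1 := fun i => by
    have h1 := key i.1 i.isLt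
    have h2 : (Fin.revPerm i).1 = n - (i.1 + 1) := Fin.val_rev i
    have h3 : i.1 < n := i.isLt
    simp only [Fin.eta] at h1
    omega
  have hsum : ∑ i : Fin n, ((σ i).1) = ∑ i : Fin n, ((Fin.revPerm i).1) := by
    rw [Equiv.sum_comp σ Fin.val, Equiv.sum_comp (Fin.revPerm) Fin.val]
  have heq := (Finset.sum_eq_sum_iff_of_le (fun i _ => hle i)).mp hsum
  exact Equiv.ext (fun i => Fin.ext (heq i (Finset.mem_univ i)))

theorem sum_pick_refl {n : ℕ} (hn : 3 ≤ n) (𝒟 : Finset (Finset (Fin n)))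
    (h23 : ∀ D : Finset (Fin n), D.card = 2 ∨ D.card = 3 → D ∈ 𝒟) :
    ∑ D ∈ 𝒟, pick (Equiv.refl (Fin n)) D = 0 := by
  set A : Finset (Finset (Fin n)) := Finset.image (pairFun (n := n)) Finset.univ with hA
  have hsub : A ⊆ 𝒟 := by
    intro D hD
    obtain ⟨i, _, rfl⟩ := Finset.mem_image.mp hD
    exact h23 _ (Or.inl (pairFun_card i))
  have hzero : ∀ D ∈ 𝒟, D ∉ A → pick (Equiv.refl (Fin n)) D = 0 := by
    intro D _ hDA
    by_cases h : ∃ x, chooses (Equiv.refl (Fin n)) D x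
    · obtain ⟨x₀, h₀⟩ := h
      have hmax : ∀ y ∈ D, y ≠ x₀ → y < x₀ := fun y hy hne => h₀.2 y hy hne
      rw [pick_eq h₀, tval]
      split_ifs with h1 h2
      · obtain ⟨z, hz, hxz⟩ := h1.2.2.2
        exact absurd (hmax z hz (ne_of_gt hxz)) (lt_asymm hxz)
      · exfalso
        obtain ⟨hcard, hx, y, hy, hyx⟩ := h2
        have hne : y ≠ x₀ := fun e => by rw [e] at hyx; omega
        have hylt : y.1 < n := y.isLt
        have hxlt : x₀.1 < n := x₀.isLt
        apply hDA
        refine Finset.mem_image.mpr ⟨⟨y.1, by omega⟩, Finset.mem_univ _, ?_⟩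
        rw [pair_eq hcard hx hy hne]
        ext z
        simp only [pairFun, Finset.mem_insert, Finset.mem_singleton, Fin.ext_iff]
        omega
      · rfl
    · rw [pick, dif_neg h]
  rw [← Finset.sum_subset hsub hzero]
  have hinj : ∀ x ∈ (Finset.univ : Finset (Fin (n - 1))), ∀ y ∈ Finset.univ,
      pairFun (n := n) x = pairFun y → x = y := fun x _ y _ h => pairFun_injective h
  rw [hA, Finset.sum_image hinj]
  have hterm : ∀ i : Fin (n - 1),
      pick (Equiv.refl (Fin n)) (pairFun i) = cval n (i.1 + 1) := by
    intro i
    have hi := i.isLt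
    have hch : chooses (Equiv.refl (Fin n)) (pairFun i) ⟨i.1 + 1, by omega⟩ := by
      constructor
      · simp [pairFun]
      · intro y hy hne
        simp only [pairFun, Finset.mem_insert, Finset.mem_singleton] at hy
        rcases hy with rfl | rfl
        · exact Fin.mk_lt_mk.mpr (Nat.lt_succ_self _)
        · exact absurd rfl hne
    rw [pick_eq hch, tval, if_neg, if_pos]
    · exact ⟨pairFun_card i, by simp [pairFun], ⟨⟨i.1, by omega⟩, by simp [pairFun], rfl⟩⟩
    · intro h1
      have hc := h1.1
      rw [pairFun_card] at hc
      omega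
  rw [Finset.sum_congr rfl (fun i _ => hterm i)]
  rw [Fin.sum_univ_eq_sum_range (fun j => cval n (j + 1)) (n - 1)]
  have h1 : n - 1 = (n - 2) + 1 := by omega
  rw [h1, Finset.sum_range_succ']
  have h2 : ∀ i ∈ Finset.range (n - 2), cval n (i + 1 + 1) = 1 :=
    fun i _ => by rw [cval, if_neg (by omega)]
  rw [Finset.sum_congr rfl h2, Finset.sum_const, Finset.card_range, nsmul_eq_mul, mul_one]
  rw [cval, if_pos rfl]
  have h3 : ((n - 2 : ℕ) : ℝ) = (n : ℝ) - 2 := by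
    have : (2 : ℕ) ≤ n := by omega
    push_cast [this]
    ring
  rw [h3]
  ring

theorem exists_peak {n : ℕ} (σ : Fin n ≃ Fin n) (h1n : 1 < n)
    (hasc0 : σ ⟨0, by omega⟩ < σ ⟨1, h1n⟩) :
    ∀ j : ℕ, ∀ hj : j + 1 < n, σ ⟨j + 1, hj⟩ < σ ⟨j, by omega⟩ →
      ∃ k, ∃ hk : k + 1 < n, 0 < k ∧
        (σ ⟨k - 1, by omega⟩ < σ ⟨k, by omega⟩) ∧ σ ⟨k + 1, hk⟩ < σ ⟨k, by omega⟩ := by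
  intro j
  induction j with
  | zero => intro hj hdes; exact absurd hdes (asymm hasc0)
  | succ m ih =>
    intro hj hdes
    rcases lt_or_ge (σ ⟨m, by omega⟩) (σ ⟨m + 1, by omega⟩) with h | h
    · exact ⟨m + 1, hj, Nat.succ_pos m, h, hdes⟩
    · have hne : σ ⟨m + 1, by omega⟩ ≠ σ ⟨m, by omega⟩ := fun e => by
        have := σ.injective e
        simp only [Fin.mk.injEq] at this
        omega
      exact ih (by omega) (lt_of_le_of_ne h hne)

/-- For `σ` different from `refl` and `revPerm`, the pick-sum is strictly positive. -/
theorem sum_pick_pos {n : ℕ} (hn : 3 ≤ n) (𝒟 : Finset (Finset (Fin n)))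
    (h23 : ∀ D : Finset (Fin n), D.card = 2 ∨ D.card = 3 → D ∈ 𝒟)
    (σ : Fin n ≃ Fin n) (hrev : σ ≠ Fin.revPerm) (hrefl : σ ≠ Equiv.refl (Fin n)) :
    0 < ∑ D ∈ 𝒟, pick σ D := by
  have h0 : (0 : ℕ) < n - 1 := by omega
  have hP0mem : pairFun (n := n) ⟨0, h0⟩ ∈ 𝒟 := h23 _ (Or.inl (pairFun_card _))
  have hncast : (3 : ℝ) ≤ (n : ℝ) := by exact_mod_cast hn
  have h01 : σ ⟨0, by omega⟩ ≠ σ ⟨1, by omega⟩ := by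
    intro e
    have := σ.injective e
    simp [Fin.ext_iff] at this
  rw [← Finset.add_sum_erase _ _ hP0mem]
  rcases lt_or_gt_of_ne h01 with hAsc | hDesc
  · -- σ(0) < σ(1) : there must be a descent, giving a middle-max triple worth n
    have hdes : ∃ j : ℕ, ∃ hj : j + 1 < n, σ ⟨j + 1, hj⟩ < σ ⟨j, by omega⟩ := by
      by_contra hno
      push_neg at hno
      apply hrefl
      apply eq_refl_of_ascents
      intro j hj
      refine lt_of_le_of_ne (hno j hj) (fun e => ?_)
      have := σ.injective e
      simp only [Fin.mk.injEq] at this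
      omega
    obtain ⟨j, hj, hdesj⟩ := hdes
    obtain ⟨k, hk, hkpos, hasck, hdesk⟩ := exists_peak σ (by omega) hAsc j hj hdesj
    have hk1 : k - 1 < n := by omega
    have hk0 : k < n := by omega
    have hTcard :
        (({⟨k - 1, hk1⟩, ⟨k, hk0⟩, ⟨k + 1, hk⟩} : Finset (Fin n))).card = 3 := by
      refine Finset.card_eq_three.mpr ⟨_, _, _, ?_, ?_, ?_, rfl⟩
      · intro e; simp only [Fin.mk.injEq] at e; omega
      · intro e; simp only [Fin.mk.injEq] at e; omega
      · intro e; simp only [Fin.mk.injEq] at e; omega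
    have hch : chooses σ ({⟨k - 1, hk1⟩, ⟨k, hk0⟩, ⟨k + 1, hk⟩} : Finset (Fin n))
        ⟨k, hk0⟩ := by
      constructor
      · simp
      · intro y hy hne
        simp only [Finset.mem_insert, Finset.mem_singleton] at hy
        rcases hy with rfl | rfl | rfl
        · exact hasck
        · exact absurd rfl hne
        · exact hdesk
    have hTmem : ({⟨k - 1, hk1⟩, ⟨k, hk0⟩, ⟨k + 1, hk⟩} : Finset (Fin n)) ∈ 𝒟 :=
      h23 _ (Or.inr hTcard)
    have hTne : ({⟨k - 1, hk1⟩, ⟨k, hk0⟩, ⟨k + 1, hk⟩} : Finset (Fin n))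
        ≠ pairFun ⟨0, h0⟩ := by
      intro e
      have hc := congrArg Finset.card e
      rw [hTcard, pairFun_card] at hc
      omega
    have hpickT : pick σ ({⟨k - 1, hk1⟩, ⟨k, hk0⟩, ⟨k + 1, hk⟩} : Finset (Fin n))
        = (n : ℝ) := by
      rw [pick_eq hch, tval, if_pos]
      exact ⟨hTcard, by simp,
        ⟨⟨k - 1, hk1⟩, by simp, Fin.mk_lt_mk.mpr (by omega)⟩,
        ⟨⟨k + 1, hk⟩, by simp, Fin.mk_lt_mk.mpr (by omega)⟩⟩
    have hrest : (n : ℝ) ≤ ∑ D ∈ 𝒟.erase (pairFun ⟨0, h0⟩), pick σ D := by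
      rw [← hpickT]
      exact Finset.single_le_sum
        (fun D hD => pick_nonneg hn σ (Finset.mem_erase.mp hD).1)
        (Finset.mem_erase.mpr ⟨hTne, hTmem⟩)
    have hP0ge := pick_ge_neg hn σ (pairFun ⟨0, h0⟩)
    linarith
  · -- σ(1) < σ(0) : there must be an ascent j ≥ 1, giving a pair worth 1
    have hascEx : ∃ j : ℕ, ∃ hj : j + 1 < n, σ ⟨j, by omega⟩ < σ ⟨j + 1, hj⟩ := by
      by_contra hno
      push_neg at hno
      apply hrev
      apply eq_rev_of_descents
      intro j hj
      refine lt_of_le_of_ne (hno j hj) (fun e => ?_)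
      have := σ.injective e
      simp only [Fin.mk.injEq] at this
      omega
    obtain ⟨j, hj, hascj⟩ := hascEx
    have hjpos : j ≠ 0 := by
      intro h0'
      subst h0'
      exact absurd hascj (asymm hDesc)
    have hjlt : j < n - 1 := by omega
    have hch : chooses σ (pairFun ⟨j, hjlt⟩) ⟨j + 1, hj⟩ := by
      constructor
      · simp [pairFun]
      · intro y hy hne
        simp only [pairFun, Finset.mem_insert, Finset.mem_singleton] at hy
        rcases hy with rfl | rfl
        · exact hascj
        · exact absurd rfl hne
    have hDjmem : pairFun (n := n) ⟨j, hjlt⟩ ∈ 𝒟 := h23 _ (Or.inl (pairFun_card _))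
    have hDjne : pairFun (n := n) ⟨j, hjlt⟩ ≠ pairFun ⟨0, h0⟩ := by
      intro e
      have := pairFun_injective e
      simp only [Fin.mk.injEq] at this
      exact hjpos this
    have hpickDj : pick σ (pairFun ⟨j, hjlt⟩) = 1 := by
      rw [pick_eq hch, tval, if_neg, if_pos]
      · rw [cval, if_neg (show ¬(j + 1 = 1) by omega)]
      · exact ⟨pairFun_card _, by simp [pairFun],
          ⟨⟨j, by omega⟩, by simp [pairFun], rfl⟩⟩
      · intro h1
        have hc := h1.1
        rw [pairFun_card] at hc
        omega
    have hP0pick : pick σ (pairFun (n := n) ⟨0, h0⟩) = 0 := by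
      have hch0 : chooses σ (pairFun ⟨0, h0⟩) ⟨0, by omega⟩ := by
        constructor
        · simp [pairFun]
        · intro y hy hne
          simp only [pairFun, Finset.mem_insert, Finset.mem_singleton] at hy
          rcases hy with rfl | rfl
          · exact absurd rfl hne
          · exact hDesc
      rw [pick_eq hch0]
      refine tval_zero_of_least (fun y hy hne => ?_)
      simp only [pairFun, Finset.mem_insert, Finset.mem_singleton] at hy
      rcases hy with rfl | rfl
      · exact absurd rfl hne
      · exact Fin.mk_lt_mk.mpr (by omega)
    have hrest : (1 : ℝ) ≤ ∑ D ∈ 𝒟.erase (pairFun ⟨0, h0⟩), pick σ D := by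
      rw [← hpickDj]
      exact Finset.single_le_sum
        (fun D hD => pick_nonneg hn σ (Finset.mem_erase.mp hD).1)
        (Finset.mem_erase.mpr ⟨hDjne, hDjmem⟩)
    rw [hP0pick]
    linarith

end RhoAux

/-- Adjacency of a ranking and its reverse: with `X = Fin n` (`n ≥ 3`), `π = Fin.revPerm`
(so `π(x_i) > π(x_{i+1})`) and its reverse `π⁻ = Equiv.refl`, there is a linear functional
`t` taking the common value `a` at `ρ^π` and `ρ^{π⁻}` and a strictly larger value at every
other ranking's vertex. -/
theorem rho_reverse_adjacent (n : ℕ) (hn : 3 ≤ n) (𝒟 : Finset (Finset (Fin n)))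
    (h23 : ∀ D : Finset (Fin n), D.card = 2 ∨ D.card = 3 → D ∈ 𝒟) :
    ∃ (t : ({D : Finset (Fin n) // D ∈ 𝒟} × Fin n) → ℝ) (a : ℝ),
      (∑ i, rhoVec 𝒟 (Fin.revPerm : Fin n ≃ Fin n) i * t i) = a ∧
      (∑ i, rhoVec 𝒟 (Equiv.refl (Fin n)) i * t i) = a ∧
      ∀ σ : Fin n ≃ Fin n, σ ≠ (Fin.revPerm : Fin n ≃ Fin n) → σ ≠ Equiv.refl (Fin n) →
        a < ∑ i, rhoVec 𝒟 σ i * t i := by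
  refine ⟨fun q => RhoAux.tval n q.1.1 q.2, 0, ?_, ?_, ?_⟩
  · exact (RhoAux.sum_eq 𝒟 Fin.revPerm).trans
      (Finset.sum_eq_zero (fun D _ => RhoAux.pick_rev D))
  · exact (RhoAux.sum_eq 𝒟 (Equiv.refl (Fin n))).trans (RhoAux.sum_pick_refl hn 𝒟 h23)
  · intro σ hrev hrefl
    exact lt_of_lt_of_eq (RhoAux.sum_pick_pos hn 𝒟 h23 σ hrev hrefl)
      (RhoAux.sum_eq 𝒟 σ).symm
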